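/- Let μ and μ^N have densities exp(−Φ)/Z and exp(−Φ^N)/Z^N with respect to μ₀, where Φ, Φ^N satisfy the lower bound Φ(u) ≥ M − α₁‖u‖_X uniformly in N, local boundedness, and |Φ(u) − Φ^N(u)| ≤ exp(α₃‖u‖_X + C)ψ(N) with ψ(N) → 0. If μ₀ is a (κ, X^{s,q}) Besov measure with s > t + d/q, C^t ↪ X with constant c_e, and κ > 2 c_e r*(α₁ + 2α₃), then d_Hell(μ, μ^N) ≤ C ψ(N) with C independent of N. -/

import Mathlib

open MeasureTheory Real Filter

private lemma sq_add_le_two (x y : ℝ) : (x + y) ^ 2 ≤ 2 * x ^ 2 + 2 * y ^ 2 := by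
  nlinarith [sq_nonneg (x - y)]

private lemma sqrt_exp_eq (x : ℝ) : Real.sqrt (Real.exp x) = Real.exp (x / 2) := by
  rw [show Real.exp x = Real.exp (x / 2) ^ 2 by rw [sq, ← Real.exp_add]; ring_nf]
  exact Real.sqrt_sq (Real.exp_pos _).le

private lemma abs_exp_sub_exp_le (a b : ℝ) :
    |Real.exp a - Real.exp b| ≤ max (Real.exp a) (Real.exp b) * |a - b| := by
  have key : ∀ p q : ℝ, q ≤ p →
      |Real.exp p - Real.exp q| ≤ max (Real.exp p) (Real.exp q) * |p - q| := by
    intro p q hpq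
    rw [abs_of_nonneg (sub_nonneg.2 (Real.exp_le_exp.2 hpq)), abs_of_nonneg (sub_nonneg.2 hpq),
      max_eq_left (Real.exp_le_exp.2 hpq)]
    have h1 := Real.add_one_le_exp (q - p)
    have h2 : Real.exp q = Real.exp p * Real.exp (q - p) := by
      rw [← Real.exp_add]; ring_nf
    nlinarith [Real.exp_pos p]
  rcases le_total b a with h | h
  · exact key a b h
  · have := key b a h
    rw [abs_sub_comm, abs_sub_comm a b, max_comm]
    exact this

set_option maxHeartbeats 1000000 in
theorem posterior_approximation_hellinger
    {X : Type*} [NormedAddCommGroup X] [MeasurableSpace X]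
    (μ0 : Measure X) [IsProbabilityMeasure μ0]
    (Φ : X → ℝ) (hΦmeas : Measurable Φ)
    (ΦN : ℕ → X → ℝ) (hΦNmeas : ∀ N, Measurable (ΦN N))
    (α₁ α₃ : ℝ) (hα₁ : 0 ≤ α₁) (hα₃ : 0 ≤ α₃)
    -- uniform lower bound (Assumption (i), uniformly in N)
    (M : ℝ) (hlow : ∀ u, M - α₁ * ‖u‖ ≤ Φ u) (hlowN : ∀ N u, M - α₁ * ‖u‖ ≤ ΦN N u)
    -- uniform local upper bound (Assumption (ii), uniformly in N)
    (K : ℝ → ℝ) (hupp : ∀ r : ℝ, ∀ u, ‖u‖ < r → Φ u ≤ K r)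
    (huppN : ∀ r : ℝ, ∀ N u, ‖u‖ < r → ΦN N u ≤ K r)
    -- approximation of the potential
    (C : ℝ) (ψ : ℕ → ℝ) (hψ0 : ∀ N, 0 ≤ ψ N) (hψ : Tendsto ψ atTop (nhds 0))
    (happ : ∀ N u, |Φ u - ΦN N u| ≤ Real.exp (α₃ * ‖u‖ + C) * ψ N)
    -- Besov prior: Fernique-like exponential integrability with constants c_e, r*
    (ce rstar κ : ℝ) (hce : 0 < ce) (hrstar : 0 < rstar)
    (hκ : 2 * ce * rstar * (α₁ + 2 * α₃) < κ)
    (hFer : ∀ α : ℝ, 0 < α → α < κ / (2 * ce * rstar) →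
      Integrable (fun u => Real.exp (α * ‖u‖)) μ0) :
    ∃ Ch : ℝ, ∀ N : ℕ,
      Real.sqrt ((1 / 2) * ∫ u,
        (Real.sqrt (Real.exp (-Φ u) / ∫ v, Real.exp (-Φ v) ∂μ0)
          - Real.sqrt (Real.exp (-ΦN N u) / ∫ v, Real.exp (-ΦN N v) ∂μ0)) ^ 2 ∂μ0)
      ≤ Ch * ψ N := by
  classical
  -- the exponential rate γ
  have hκpos : 0 < κ := lt_of_le_of_lt (by positivity) hκ
  set D : ℝ := κ / (2 * ce * rstar) with hD
  have hDpos : 0 < D := by positivity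
  have hsumD : α₁ + 2 * α₃ < D := by
    rw [hD, lt_div_iff₀ (by positivity)]
    linarith [hκ, (by ring : (α₁ + 2 * α₃) * (2 * ce * rstar) = 2 * ce * rstar * (α₁ + 2 * α₃))]
  set γ : ℝ := (α₁ + 2 * α₃) / 2 + D / 2 with hγdef
  have hγpos : 0 < γ := by rw [hγdef]; linarith
  have hγlt : γ < D := by rw [hγdef]; linarith
  have hγge : α₁ + 2 * α₃ ≤ γ := by rw [hγdef]; linarith
  have hγge1 : α₁ ≤ γ := by linarith
  have hγge2 : α₁ + α₃ ≤ γ := by linarith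
  have hG : Integrable (fun u => Real.exp (γ * ‖u‖)) μ0 := hFer γ hγpos hγlt
  set Ig : ℝ := ∫ u, Real.exp (γ * ‖u‖) ∂μ0 with hIg
  have hIgpos : 0 < Ig := by
    rw [hIg, integral_pos_iff_support_of_nonneg (fun u => (Real.exp_pos _).le) hG]
    have hs : Function.support (fun u : X => Real.exp (γ * ‖u‖)) = Set.univ :=
      Set.eq_univ_of_forall fun u => (Real.exp_pos _).ne'
    rw [hs]; simp
  -- a.e. measurability of the norm
  have hnorm : AEMeasurable (fun u : X => ‖u‖) μ0 := by
    have h1 : AEMeasurable (fun u : X => γ * ‖u‖) μ0 := by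
      exact (Real.measurable_log.comp_aemeasurable hG.aemeasurable).congr
        (ae_of_all _ fun u => by simp [Function.comp, Real.log_exp])
    have h2 := h1.const_mul γ⁻¹
    simpa [← mul_assoc, inv_mul_cancel₀ hγpos.ne'] using h2
  -- uniform bound on ψ
  obtain ⟨B, hB⟩ := hψ.bddAbove_range
  have hBb : ∀ N, ψ N ≤ B := fun N => hB ⟨N, rfl⟩
  have hB0 : 0 ≤ B := le_trans (hψ0 0) (hBb 0)
  -- generic integrability from domination by c · exp(γ‖u‖)
  have hint : ∀ (f : X → ℝ) (c : ℝ), AEStronglyMeasurable f μ0 →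
      (∀ u, |f u| ≤ c * Real.exp (γ * ‖u‖)) → Integrable f μ0 := by
    intro f c hm hb
    exact (hG.const_mul c).mono' hm (ae_of_all _ fun u => by
      simpa [Real.norm_eq_abs] using hb u)
  -- pointwise exponential bounds
  have hexpΦ : ∀ u, Real.exp (-Φ u) ≤ Real.exp (-M) * Real.exp (γ * ‖u‖) := by
    intro u
    rw [← Real.exp_add]
    apply Real.exp_le_exp.2
    have h1 := hlow u
    have h2 : α₁ * ‖u‖ ≤ γ * ‖u‖ := mul_le_mul_of_nonneg_right hγge1 (norm_nonneg u)
    linarith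
  have hexpΦN : ∀ N u, Real.exp (-ΦN N u) ≤ Real.exp (-M) * Real.exp (γ * ‖u‖) := by
    intro N u
    rw [← Real.exp_add]
    apply Real.exp_le_exp.2
    have h1 := hlowN N u
    have h2 : α₁ * ‖u‖ ≤ γ * ‖u‖ := mul_le_mul_of_nonneg_right hγge1 (norm_nonneg u)
    linarith
  -- integrability of e^{-Φ}, e^{-Φ^N}
  have hiΦ : Integrable (fun u => Real.exp (-Φ u)) μ0 :=
    hint _ (Real.exp (-M)) (Real.measurable_exp.comp hΦmeas.neg).aestronglyMeasurable
      (fun u => by rw [abs_of_nonneg (Real.exp_pos _).le]; exact hexpΦ u)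
  have hiΦN : ∀ N, Integrable (fun u => Real.exp (-ΦN N u)) μ0 := fun N =>
    hint _ (Real.exp (-M)) (Real.measurable_exp.comp (hΦNmeas N).neg).aestronglyMeasurable
      (fun u => by rw [abs_of_nonneg (Real.exp_pos _).le]; exact hexpΦN N u)
  set Z : ℝ := ∫ v, Real.exp (-Φ v) ∂μ0 with hZ
  -- the uniform lower bound δ
  set g : X → ℝ := fun u => Real.exp (-Φ u - Real.exp (α₃ * ‖u‖ + C) * B) with hg
  have hgm : AEStronglyMeasurable g μ0 := by
    apply AEMeasurable.aestronglyMeasurable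
    apply Real.measurable_exp.comp_aemeasurable
    exact (hΦmeas.aemeasurable.neg).sub
      ((Real.measurable_exp.comp_aemeasurable ((hnorm.const_mul α₃).add_const C)).mul_const B)
  have hgleΦ : ∀ u, g u ≤ Real.exp (-Φ u) := by
    intro u
    apply Real.exp_le_exp.2
    have : 0 ≤ Real.exp (α₃ * ‖u‖ + C) * B := mul_nonneg (Real.exp_pos _).le hB0
    linarith
  have hig : Integrable g μ0 := hint g (Real.exp (-M)) hgm
    (fun u => by
      rw [abs_of_nonneg (Real.exp_pos _).le]
      exact le_trans (hgleΦ u) (hexpΦ u))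
  set δ : ℝ := ∫ u, g u ∂μ0 with hδ
  have hδpos : 0 < δ := by
    rw [hδ, integral_pos_iff_support_of_nonneg (fun u => (Real.exp_pos _).le) hig]
    have hs : Function.support g = Set.univ :=
      Set.eq_univ_of_forall fun u => (Real.exp_pos _).ne'
    rw [hs]; simp
  have hδZ : δ ≤ Z := integral_mono hig hiΦ hgleΦ
  have hδZN : ∀ N, δ ≤ ∫ v, Real.exp (-ΦN N v) ∂μ0 := by
    intro N
    apply integral_mono hig (hiΦN N)
    intro u
    apply Real.exp_le_exp.2
    have h1 := (abs_le.1 (happ N u)).1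
    have h2 : Real.exp (α₃ * ‖u‖ + C) * ψ N ≤ Real.exp (α₃ * ‖u‖ + C) * B :=
      mul_le_mul_of_nonneg_left (hBb N) (Real.exp_pos _).le
    linarith
  set Zmax : ℝ := Real.exp (-M) * Ig with hZmax
  have hZle : Z ≤ Zmax := by
    rw [hZ, hZmax, hIg, ← integral_const_mul]
    exact integral_mono hiΦ (hG.const_mul _) hexpΦ
  have hZNle : ∀ N, (∫ v, Real.exp (-ΦN N v) ∂μ0) ≤ Zmax := by
    intro N
    rw [hZmax, hIg, ← integral_const_mul]
    exact integral_mono (hiΦN N) (hG.const_mul _) (hexpΦN N)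
  have hZpos : 0 < Z := lt_of_lt_of_le hδpos hδZ
  set sδ : ℝ := Real.sqrt δ with hsδ
  have hsδpos : 0 < sδ := Real.sqrt_pos.2 hδpos
  -- constants
  set c₂ : ℝ := Real.exp (C - M) * Ig with hc₂
  have hc₂pos : 0 < c₂ := by positivity
  set K0 : ℝ := Real.exp (2 * C - M) * Ig / (4 * δ) + c₂ ^ 2 * Zmax / (2 * δ * sδ) ^ 2 with hK0
  have hZmaxpos : 0 < Zmax := lt_of_lt_of_le hZpos hZle
  have hK0pos : 0 < K0 := by rw [hK0]; positivity
  refine ⟨Real.sqrt K0, fun N => ?_⟩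
  set ZN : ℝ := ∫ v, Real.exp (-ΦN N v) ∂μ0 with hZN
  have hZNpos : 0 < ZN := lt_of_lt_of_le hδpos (hδZN N)
  set s : ℝ := Real.sqrt Z with hs
  set t : ℝ := Real.sqrt ZN with ht
  have hspos : 0 < s := Real.sqrt_pos.2 hZpos
  have htpos : 0 < t := Real.sqrt_pos.2 hZNpos
  have hs2 : s ^ 2 = Z := Real.sq_sqrt hZpos.le
  have ht2 : t ^ 2 = ZN := Real.sq_sqrt hZNpos.le
  have hsδs : sδ ≤ s := Real.sqrt_le_sqrt hδZ
  have hsδt : sδ ≤ t := Real.sqrt_le_sqrt (hδZN N)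
  set q : ℝ := (1 / s - 1 / t) ^ 2 with hq
  have hqnn : 0 ≤ q := sq_nonneg _
  -- bound on |Z - ZN|
  have hZZN : |Z - ZN| ≤ c₂ * ψ N := by
    have hsub : Integrable (fun u => Real.exp (-Φ u) - Real.exp (-ΦN N u)) μ0 :=
      hiΦ.sub (hiΦN N)
    have h1 : |Z - ZN| ≤ ∫ u, |Real.exp (-Φ u) - Real.exp (-ΦN N u)| ∂μ0 := by
      rw [hZ, hZN, ← integral_sub hiΦ (hiΦN N)]
      simpa [Real.norm_eq_abs] using norm_integral_le_integral_norm
        (μ := μ0) (fun u => Real.exp (-Φ u) - Real.exp (-ΦN N u))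
    refine le_trans h1 ?_
    have h2 : ∀ u, |Real.exp (-Φ u) - Real.exp (-ΦN N u)| ≤
        (Real.exp (C - M) * ψ N) * Real.exp (γ * ‖u‖) := by
      intro u
      refine le_trans (abs_exp_sub_exp_le _ _) ?_
      have hmax : max (Real.exp (-Φ u)) (Real.exp (-ΦN N u)) ≤
          Real.exp (α₁ * ‖u‖ - M) := by
        apply max_le <;> apply Real.exp_le_exp.2
        · linarith [hlow u]
        · linarith [hlowN N u]
      have habs : |(-Φ u) - (-ΦN N u)| ≤ Real.exp (α₃ * ‖u‖ + C) * ψ N := by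
        rw [show (-Φ u) - (-ΦN N u) = -(Φ u - ΦN N u) by ring, abs_neg]
        exact happ N u
      calc max (Real.exp (-Φ u)) (Real.exp (-ΦN N u)) * |(-Φ u) - (-ΦN N u)|
          ≤ Real.exp (α₁ * ‖u‖ - M) * (Real.exp (α₃ * ‖u‖ + C) * ψ N) :=
            mul_le_mul hmax habs (abs_nonneg _) (Real.exp_pos _).le
        _ = (Real.exp (α₁ * ‖u‖ - M) * Real.exp (α₃ * ‖u‖ + C)) * ψ N := by ring
        _ ≤ (Real.exp (C - M) * Real.exp (γ * ‖u‖)) * ψ N := by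
            refine mul_le_mul_of_nonneg_right ?_ (hψ0 N)
            rw [← Real.exp_add, ← Real.exp_add]
            apply Real.exp_le_exp.2
            have h4 : (α₁ + α₃) * ‖u‖ ≤ γ * ‖u‖ :=
              mul_le_mul_of_nonneg_right hγge2 (norm_nonneg u)
            linarith [h4, (by ring : α₁ * ‖u‖ + α₃ * ‖u‖ = (α₁ + α₃) * ‖u‖)]
        _ = (Real.exp (C - M) * ψ N) * Real.exp (γ * ‖u‖) := by ring
    calc (∫ u, |Real.exp (-Φ u) - Real.exp (-ΦN N u)| ∂μ0)
        ≤ ∫ u, (Real.exp (C - M) * ψ N) * Real.exp (γ * ‖u‖) ∂μ0 :=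
          integral_mono hsub.abs (hG.const_mul _) h2
      _ = c₂ * ψ N := by rw [integral_const_mul, hc₂, ← hIg]; ring
  -- bound on q
  have hqbound : q ≤ (c₂ * ψ N) ^ 2 / (2 * δ * sδ) ^ 2 := by
    have hE : (1 / s - 1 / t) * (s * t * (s + t)) = ZN - Z := by
      rw [← hs2, ← ht2]
      field_simp
      ring
    have hP : 2 * δ * sδ ≤ s * t * (s + t) := by
      have hδδ : sδ * sδ = δ := Real.mul_self_sqrt hδpos.le
      have h1 : δ ≤ s * t := by
        rw [← hδδ]
        exact mul_le_mul hsδs hsδt hsδpos.le hspos.le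
      have h2 : 2 * sδ ≤ s + t := by linarith
      calc 2 * δ * sδ = δ * (2 * sδ) := by ring
        _ ≤ (s * t) * (s + t) :=
            mul_le_mul h1 h2 (by positivity) (mul_nonneg hspos.le htpos.le)
    have h1 : q * (s * t * (s + t)) ^ 2 = (ZN - Z) ^ 2 := by
      rw [hq, ← mul_pow, hE]
    rw [le_div_iff₀ (by positivity)]
    have h2 : q * (2 * δ * sδ) ^ 2 ≤ q * (s * t * (s + t)) ^ 2 :=
      mul_le_mul_of_nonneg_left (pow_le_pow_left₀ (by positivity) hP 2) hqnn
    have h3 : (ZN - Z) ^ 2 ≤ (c₂ * ψ N) ^ 2 := by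
      rw [← sq_abs (ZN - Z), abs_sub_comm]
      exact pow_le_pow_left₀ (abs_nonneg _) hZZN 2
    linarith
  -- pointwise bound on (a-b)^2
  set ab : X → ℝ := fun u => Real.exp (-Φ u / 2) - Real.exp (-ΦN N u / 2) with hab
  have habm : Measurable ab :=
    (Real.measurable_exp.comp (hΦmeas.neg.div_const 2)).sub
      (Real.measurable_exp.comp ((hΦNmeas N).neg.div_const 2))
  have habsq : ∀ u, (ab u) ^ 2 ≤
      (ψ N ^ 2 * Real.exp (2 * C - M) / 4) * Real.exp (γ * ‖u‖) := by
    intro u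
    have h1 : |ab u| ≤ max (Real.exp (-Φ u / 2)) (Real.exp (-ΦN N u / 2)) *
        |(-Φ u / 2) - (-ΦN N u / 2)| := abs_exp_sub_exp_le _ _
    have hmax : max (Real.exp (-Φ u / 2)) (Real.exp (-ΦN N u / 2)) ≤
        Real.exp ((α₁ * ‖u‖ - M) / 2) := by
      apply max_le <;> apply Real.exp_le_exp.2
      · linarith [hlow u]
      · linarith [hlowN N u]
    have habs2 : |(-Φ u / 2) - (-ΦN N u / 2)| ≤ Real.exp (α₃ * ‖u‖ + C) * ψ N / 2 := by
      rw [show (-Φ u / 2) - (-ΦN N u / 2) = -(Φ u - ΦN N u) / 2 by ring, abs_div, abs_neg,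
        abs_of_pos (by norm_num : (0:ℝ) < 2)]
      exact div_le_div_of_nonneg_right (happ N u) (by norm_num)
    have h2 : |ab u| ≤ Real.exp ((α₁ * ‖u‖ - M) / 2) *
        (Real.exp (α₃ * ‖u‖ + C) * ψ N / 2) :=
      le_trans h1 (mul_le_mul hmax habs2 (abs_nonneg _) (Real.exp_pos _).le)
    have h3 : (ab u) ^ 2 ≤ (Real.exp ((α₁ * ‖u‖ - M) / 2) *
        (Real.exp (α₃ * ‖u‖ + C) * ψ N / 2)) ^ 2 := by
      rw [← sq_abs (ab u)]
      exact pow_le_pow_left₀ (abs_nonneg _) h2 2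
    have e1 : Real.exp ((α₁ * ‖u‖ - M) / 2) ^ 2 = Real.exp (α₁ * ‖u‖ - M) := by
      rw [sq, ← Real.exp_add]; ring_nf
    have e2 : Real.exp (α₃ * ‖u‖ + C) ^ 2 = Real.exp (2 * α₃ * ‖u‖ + 2 * C) := by
      rw [sq, ← Real.exp_add]; ring_nf
    have e3 : Real.exp (α₁ * ‖u‖ - M) * Real.exp (2 * α₃ * ‖u‖ + 2 * C) ≤
        Real.exp (2 * C - M) * Real.exp (γ * ‖u‖) := by
      rw [← Real.exp_add, ← Real.exp_add]
      apply Real.exp_le_exp.2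
      have h4 : (α₁ + 2 * α₃) * ‖u‖ ≤ γ * ‖u‖ :=
        mul_le_mul_of_nonneg_right hγge (norm_nonneg u)
      linarith [h4, (by ring : α₁ * ‖u‖ + 2 * α₃ * ‖u‖ = (α₁ + 2 * α₃) * ‖u‖)]
    calc (ab u) ^ 2 ≤ (Real.exp ((α₁ * ‖u‖ - M) / 2) *
          (Real.exp (α₃ * ‖u‖ + C) * ψ N / 2)) ^ 2 := h3
      _ = Real.exp (α₁ * ‖u‖ - M) * Real.exp (2 * α₃ * ‖u‖ + 2 * C) * ψ N ^ 2 / 4 := by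
          rw [mul_pow, div_pow, mul_pow, e1, e2]; ring
      _ = Real.exp (α₁ * ‖u‖ - M) * Real.exp (2 * α₃ * ‖u‖ + 2 * C) * (ψ N ^ 2 / 4) := by
          ring
      _ ≤ Real.exp (2 * C - M) * Real.exp (γ * ‖u‖) * (ψ N ^ 2 / 4) :=
          mul_le_mul_of_nonneg_right e3 (by positivity)
      _ = Real.exp (2 * C - M) * Real.exp (γ * ‖u‖) * ψ N ^ 2 / 4 := by ring
      _ = (ψ N ^ 2 * Real.exp (2 * C - M) / 4) * Real.exp (γ * ‖u‖) := by ring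
  -- integrability of ab^2
  have hiab : Integrable (fun u => (ab u) ^ 2) μ0 :=
    hint _ (ψ N ^ 2 * Real.exp (2 * C - M) / 4) (habm.pow_const 2).aestronglyMeasurable
      (fun u => by rw [abs_of_nonneg (sq_nonneg _)]; exact habsq u)
  set Isq : ℝ := ∫ u, (ab u) ^ 2 ∂μ0 with hIsq
  have hIsqnn : 0 ≤ Isq := integral_nonneg fun u => sq_nonneg _
  have hIsqle : Isq ≤ ψ N ^ 2 * Real.exp (2 * C - M) / 4 * Ig := by
    rw [hIsq, hIg, ← integral_const_mul]
    exact integral_mono hiab (hG.const_mul _) habsq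
  -- pointwise bound of the Hellinger integrand
  set F : X → ℝ := fun u => 2 * ((ab u) ^ 2 / Z) + 2 * (Real.exp (-ΦN N u) * q) with hF
  have hFint : Integrable F μ0 :=
    ((hiab.div_const Z).const_mul 2).add (((hiΦN N).mul_const q).const_mul 2)
  have hpt : ∀ u, (Real.sqrt (Real.exp (-Φ u) / Z) - Real.sqrt (Real.exp (-ΦN N u) / ZN)) ^ 2
      ≤ F u := by
    intro u
    have hd1 : Real.sqrt (Real.exp (-Φ u) / Z) = Real.exp (-Φ u / 2) / s := by
      rw [hs, Real.sqrt_div (Real.exp_pos _).le, sqrt_exp_eq]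
    have hd2 : Real.sqrt (Real.exp (-ΦN N u) / ZN) = Real.exp (-ΦN N u / 2) / t := by
      rw [ht, Real.sqrt_div (Real.exp_pos _).le, sqrt_exp_eq]
    rw [hd1, hd2]
    have hsplit : Real.exp (-Φ u / 2) / s - Real.exp (-ΦN N u / 2) / t
        = ab u / s + Real.exp (-ΦN N u / 2) * (1 / s - 1 / t) := by
      rw [hab]
      field_simp
      ring
    rw [hsplit]
    refine le_trans (sq_add_le_two _ _) ?_
    have h1 : (ab u / s) ^ 2 = (ab u) ^ 2 / Z := by rw [div_pow, hs2]
    have h2 : (Real.exp (-ΦN N u / 2) * (1 / s - 1 / t)) ^ 2 = Real.exp (-ΦN N u) * q := by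
      rw [mul_pow, hq]
      congr 1
      rw [sq, ← Real.exp_add]; ring_nf
    rw [h1, h2, hF]
  -- integrability of the Hellinger integrand
  have hhm : Measurable (fun u =>
      (Real.sqrt (Real.exp (-Φ u) / Z) - Real.sqrt (Real.exp (-ΦN N u) / ZN)) ^ 2) := by
    apply Measurable.pow_const
    refine Measurable.sub ?_ ?_
    · exact Real.continuous_sqrt.measurable.comp
        ((Real.measurable_exp.comp hΦmeas.neg).div_const Z)
    · exact Real.continuous_sqrt.measurable.comp
        ((Real.measurable_exp.comp (hΦNmeas N).neg).div_const ZN)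
  have hhint : Integrable (fun u =>
      (Real.sqrt (Real.exp (-Φ u) / Z) - Real.sqrt (Real.exp (-ΦN N u) / ZN)) ^ 2) μ0 :=
    hFint.mono' hhm.aestronglyMeasurable (ae_of_all _ fun u => by
      rw [Real.norm_eq_abs, abs_of_nonneg (sq_nonneg _)]; exact hpt u)
  -- the integral bound
  have hintle : (∫ u, (Real.sqrt (Real.exp (-Φ u) / Z)
      - Real.sqrt (Real.exp (-ΦN N u) / ZN)) ^ 2 ∂μ0) ≤ 2 * (Isq / Z) + 2 * (ZN * q) := by
    calc (∫ u, (Real.sqrt (Real.exp (-Φ u) / Z)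
        - Real.sqrt (Real.exp (-ΦN N u) / ZN)) ^ 2 ∂μ0)
        ≤ ∫ u, F u ∂μ0 := integral_mono hhint hFint hpt
      _ = 2 * (Isq / Z) + 2 * (ZN * q) := by
          rw [hF, integral_add ((hiab.div_const Z).const_mul 2)
            (((hiΦN N).mul_const q).const_mul 2), integral_const_mul, integral_const_mul,
            integral_div, integral_mul_const, hIsq, hZN]
  have t1 : Isq / Z ≤ (ψ N ^ 2 * Real.exp (2 * C - M) / 4 * Ig) / δ :=
    div_le_div₀ (mul_nonneg (by positivity) hIgpos.le) hIsqle hδpos hδZ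
  have t2 : ZN * q ≤ Zmax * ((c₂ * ψ N) ^ 2 / (2 * δ * sδ) ^ 2) :=
    mul_le_mul (hZNle N) hqbound hqnn hZmaxpos.le
  have hsum : Isq / Z + ZN * q ≤ K0 * ψ N ^ 2 := by
    rw [hK0]
    have expand : (Real.exp (2 * C - M) * Ig / (4 * δ) + c₂ ^ 2 * Zmax / (2 * δ * sδ) ^ 2)
        * ψ N ^ 2
        = (ψ N ^ 2 * Real.exp (2 * C - M) / 4 * Ig) / δ
          + Zmax * ((c₂ * ψ N) ^ 2 / (2 * δ * sδ) ^ 2) := by ring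
    rw [expand]
    exact add_le_add t1 t2
  have hmain : (1 / 2) * (∫ u, (Real.sqrt (Real.exp (-Φ u) / Z)
      - Real.sqrt (Real.exp (-ΦN N u) / ZN)) ^ 2 ∂μ0) ≤ K0 * ψ N ^ 2 := by
    linarith [hintle, hsum]
  calc Real.sqrt ((1 / 2) * ∫ u, (Real.sqrt (Real.exp (-Φ u) / Z)
      - Real.sqrt (Real.exp (-ΦN N u) / ZN)) ^ 2 ∂μ0)
      ≤ Real.sqrt (K0 * ψ N ^ 2) := Real.sqrt_le_sqrt hmain
    _ = Real.sqrt K0 * ψ N := by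
        rw [Real.sqrt_mul hK0pos.le, Real.sqrt_sq (hψ0 N)]
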